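/- arXiv:2203.02476 — 3 statements merged into one kernel-verified Lean document; each statement's English description precedes it below -/
import Mathlib

section
/- Let A be a finite subset of the torus (ℤ/nℤ)^d with k = |A| elements, ordered as x_1, …, x_k greedily so that for each j, d(x_j, x_{j+1}) = min over i > j of d(x_j, x_i). Then for every integer L ≥ 1, the number of indices j in {1,…,k−1} with d(x_j, x_{j+1}) ≥ L is at most (2d²n/L)^d. -/
open scoped BigOperators

/-- One step of movement on the torus `(ℤ/nℤ)^d`. -/
def torusMove (d n : ℕ) (x : Fin d → ZMod n) (m : Fin d × Bool) : Fin d → ZMod n :=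
  Function.update x m.1 (x m.1 + if m.2 then 1 else -1)

/-- Position after performing the list of moves `l` starting from `x`. -/
def posAfter (d n : ℕ) (x : Fin d → ZMod n) (l : List (Fin d × Bool)) : Fin d → ZMod n :=
  l.foldl (torusMove d n) x

/-- Graph distance on the torus `(ℤ/nℤ)^d`. -/
noncomputable def tdist (d n : ℕ) (x y : Fin d → ZMod n) : ℕ :=
  sInf {L : ℕ | ∃ l : List (Fin d × Bool), l.length = L ∧ posAfter d n x l = y}

/-- circle distance to zero -/
def cf (n : ℕ) (w : ZMod n) : ℕ := min w.val (-w).val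

lemma cf_neg (n : ℕ) (w : ZMod n) : cf n (-w) = cf n w := by
  simp [cf, min_comm]

lemma cf_cast (n : ℕ) [NeZero n] (z : ℤ) : cf n (z : ZMod n) ≤ z.natAbs := by
  rcases le_or_gt 0 z with hz | hz
  · have hz' : (z : ZMod n) = ((z.toNat : ℕ) : ZMod n) := by
      rw [← Int.cast_natCast]; congr 1; omega
    calc cf n (z : ZMod n) ≤ ((z : ZMod n)).val := min_le_left _ _
      _ = z.toNat % n := by rw [hz', ZMod.val_natCast]
      _ ≤ z.toNat := Nat.mod_le _ _
      _ = z.natAbs := by omega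
  · have hz' : -(z : ZMod n) = (((-z).toNat : ℕ) : ZMod n) := by
      rw [← Int.cast_natCast, ← Int.cast_neg]; congr 1; omega
    calc cf n (z : ZMod n) ≤ ((-(z : ZMod n))).val := min_le_right _ _
      _ = (-z).toNat % n := by rw [hz', ZMod.val_natCast]
      _ ≤ (-z).toNat := Nat.mod_le _ _
      _ = z.natAbs := by omega

lemma cf_rep (n : ℕ) [NeZero n] (w : ZMod n) :
    ∃ z : ℤ, (z : ZMod n) = w ∧ z.natAbs = cf n w := by
  rcases le_total w.val (-w).val with h | h
  · refine ⟨(w.val : ℤ), ?_, ?_⟩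
    · rw [Int.cast_natCast]; exact ZMod.natCast_rightInverse w
    · rw [Int.natAbs_natCast]; exact (min_eq_left h).symm
  · refine ⟨-(((-w).val : ℤ)), ?_, ?_⟩
    · rw [Int.cast_neg, Int.cast_natCast, ZMod.natCast_rightInverse (-w), neg_neg]
    · rw [Int.natAbs_neg, Int.natAbs_natCast]; exact (min_eq_right h).symm

lemma cf_add (n : ℕ) [NeZero n] (u v : ZMod n) : cf n (u + v) ≤ cf n u + cf n v := by
  obtain ⟨zu, hzu, hu⟩ := cf_rep n u
  obtain ⟨zv, hzv, hv⟩ := cf_rep n v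
  calc cf n (u + v) = cf n ((zu + zv : ℤ) : ZMod n) := by rw [Int.cast_add, hzu, hzv]
    _ ≤ (zu + zv).natAbs := cf_cast n _
    _ ≤ zu.natAbs + zv.natAbs := Int.natAbs_add_le _ _
    _ = cf n u + cf n v := by rw [hu, hv]

lemma cf_le_of_le (n m : ℕ) [NeZero n] (h : n ≤ 2 * m + 1) (w : ZMod n) : cf n w ≤ m := by
  by_cases hw : w = 0
  · simp [cf, hw]
  · have : NeZero w := ⟨hw⟩
    have h1 : (-w).val = n - w.val := ZMod.val_neg_of_ne_zero w
    have h2 : 0 < w.val := ZMod.val_pos.mpr hw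
    have h3 : w.val < n := ZMod.val_lt w
    simp only [cf, h1]
    omega

lemma posAfter_append (d n : ℕ) (x : Fin d → ZMod n) (l1 l2 : List (Fin d × Bool)) :
    posAfter d n x (l1 ++ l2) = posAfter d n (posAfter d n x l1) l2 :=
  List.foldl_append

lemma posAfter_replicate (d n : ℕ) (c : ℕ) (i : Fin d) (b : Bool) (x : Fin d → ZMod n) :
    posAfter d n x (List.replicate c (i, b)) =
      Function.update x i (x i + if b then (c : ZMod n) else -(c : ZMod n)) := by
  induction c generalizing x with
  | zero => simp [posAfter]
  | succ c ih =>
    rw [List.replicate_succ]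
    show posAfter d n (torusMove d n x (i, b)) (List.replicate c (i, b)) = _
    rw [ih]
    have hv : torusMove d n x (i, b) i = x i + if b then 1 else -1 := by
      simp [torusMove]
    simp only [torusMove, Function.update_idem, Function.update_self]
    cases b <;> simp only [if_true, if_false, Bool.false_eq_true, ite_true, ite_false] <;>
      congr 1 <;> push_cast <;> ring

lemma tdist_le_sum (d n : ℕ) [NeZero n] (x y : Fin d → ZMod n) :
    tdist d n x y ≤ ∑ i, cf n (y i - x i) := by
  classical
  set ml : Fin d → List (Fin d × Bool) := fun i =>
    if (y i - x i).val ≤ (x i - y i).val then List.replicate ((y i - x i).val) (i, true)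
    else List.replicate ((x i - y i).val) (i, false) with hml
  have hlen : ∀ i, (ml i).length = cf n (y i - x i) := by
    intro i
    have hns : -(y i - x i) = x i - y i := by ring
    simp only [hml]
    split_ifs with h
    · simp [cf, hns, min_eq_left h]
    · simp [cf, hns, min_eq_right (le_of_not_ge h)]
  have hpos : ∀ (i : Fin d) (x' : Fin d → ZMod n), x' i = x i →
      posAfter d n x' (ml i) = Function.update x' i (y i) := by
    intro i x' hx'
    simp only [hml]
    split_ifs with h
    · rw [posAfter_replicate]
      congr 1
      rw [hx', if_pos rfl, ZMod.natCast_rightInverse (y i - x i)]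
      ring
    · rw [posAfter_replicate]
      congr 1
      rw [hx', if_neg (by simp), ZMod.natCast_rightInverse (x i - y i)]
      ring
  have key : ∀ (ls : List (Fin d)), ls.Nodup → ∀ (x' : Fin d → ZMod n),
      (∀ i ∈ ls, x' i = x i) →
      posAfter d n x' (ls.flatMap ml) = fun i => if i ∈ ls then y i else x' i := by
    intro ls
    induction ls with
    | nil => intro _ x' _; funext i; simp [posAfter]
    | cons a tl ih =>
      intro hnd x' hx'
      rw [List.flatMap_cons, posAfter_append, hpos a x' (hx' a (by simp))]
      rw [ih (List.nodup_cons.mp hnd).2 _ ?_]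
      · funext i
        by_cases hia : i = a
        · subst hia
          have : i ∉ tl := (List.nodup_cons.mp hnd).1
          simp [this]
        · simp [hia, Function.update_of_ne hia]
      · intro i hi
        have hia : i ≠ a := fun h => (List.nodup_cons.mp hnd).1 (h ▸ hi)
        rw [Function.update_of_ne hia]
        exact hx' i (by simp [hi])
  have hfin : posAfter d n x ((List.finRange d).flatMap ml) = y := by
    rw [key (List.finRange d) (List.nodup_finRange d) x (fun _ _ => rfl)]
    funext i
    simp [List.mem_finRange]
  have hlen2 : ((List.finRange d).flatMap ml).length = ∑ i, cf n (y i - x i) := by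
    rw [List.length_flatMap, Fin.sum_univ_def]
    congr 1
    simp [Function.comp, hlen]
  exact Nat.sInf_le ⟨(List.finRange d).flatMap ml, hlen2, hfin⟩

open Classical in
/-- If `x_1, …, x_k` is a greedy ordering of a subset of the torus `(ℤ/nℤ)^d`
(each point is chosen among the remaining ones at minimal distance from the previous
point), then for every `L ≥ 1` the number of indices `j` with
`d(x_j, x_{j+1}) ≥ L` is at most `(2d²n/L)^d`. -/
theorem stmt2 (d n : ℕ) (hd : 1 ≤ d) (hn : 1 ≤ n) (k : ℕ)
    (x : Fin k → Fin d → ZMod n) (hinj : Function.Injective x)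
    (hgreedy : ∀ (j i : Fin k) (h : (j : ℕ) + 1 < k), j < i →
      tdist d n (x j) (x ⟨(j : ℕ) + 1, h⟩) ≤ tdist d n (x j) (x i))
    (L : ℕ) (hL : 1 ≤ L) :
    ((Finset.univ.filter (fun j : Fin k =>
        ∃ h : (j : ℕ) + 1 < k, L ≤ tdist d n (x j) (x ⟨(j : ℕ) + 1, h⟩))).card : ℝ)
      ≤ ((2 * d ^ 2 * n : ℝ) / L) ^ d := by
  have : NeZero n := ⟨by omega⟩
  set S := Finset.univ.filter (fun j : Fin k =>
      ∃ h : (j : ℕ) + 1 < k, L ≤ tdist d n (x j) (x ⟨(j : ℕ) + 1, h⟩)) with hS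
  rcases S.eq_empty_or_nonempty with hSe | hSne
  · rw [hSe]
    simp only [Finset.card_empty, Nat.cast_zero]
    positivity
  -- separation
  have hsep : ∀ j ∈ S, ∀ j' ∈ S, j < j' → L ≤ tdist d n (x j) (x j') := by
    intro j hj j' _ hlt
    obtain ⟨h, hLd⟩ := (Finset.mem_filter.mp hj).2
    exact hLd.trans (hgreedy j j' h hlt)
  set m : ℕ := (L - 1) / (2 * d) with hm
  -- balls
  set ball : ZMod n → Finset (ZMod n) := fun a =>
      Finset.univ.filter (fun c => cf n (c - a) ≤ m) with hball
  set B : Fin k → Finset (Fin d → ZMod n) := fun j =>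
      Fintype.piFinset (fun i => ball (x j i)) with hB
  set s : ℕ := min n (2 * m + 1) with hs
  have hs1 : 1 ≤ s := by omega
  -- ball cardinality
  have hcard_ball : ∀ a : ZMod n, s ≤ (ball a).card := by
    intro a
    rcases le_or_gt n (2 * m + 1) with h | h
    · have : ball a = Finset.univ := by
        apply Finset.eq_univ_iff_forall.mpr
        intro c
        simp only [hball, Finset.mem_filter, Finset.mem_univ, true_and]
        exact cf_le_of_le n m h _
      rw [this, Finset.card_univ, ZMod.card]
      exact hs ▸ min_le_left _ _
    · have hmap : ∀ t ∈ Finset.range (2 * m + 1),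
          a + (((t : ℤ) - (m : ℤ) : ℤ) : ZMod n) ∈ ball a := by
        intro t ht
        simp only [Finset.mem_range] at ht
        simp only [hball, Finset.mem_filter, Finset.mem_univ, true_and]
        have he : a + (((t : ℤ) - (m : ℤ) : ℤ) : ZMod n) - a
            = (((t : ℤ) - (m : ℤ) : ℤ) : ZMod n) := by ring
        rw [he]
        calc cf n _ ≤ ((t : ℤ) - m).natAbs := cf_cast n _
          _ ≤ m := by omega
      have hinj' : Set.InjOn (fun t : ℕ => a + (((t : ℤ) - (m : ℤ) : ℤ) : ZMod n))
          (Finset.range (2 * m + 1)) := by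
        intro t ht t' ht' heq
        simp only [Finset.coe_range, Set.mem_Iio] at ht ht'
        have h2 : (((t : ℤ) - m : ℤ) : ZMod n) = (((t' : ℤ) - m : ℤ) : ZMod n) :=
          add_left_cancel heq
        have h3 : ((t : ℕ) : ZMod n) = ((t' : ℕ) : ZMod n) := by
          have := sub_left_inj.mp (by push_cast at h2 ⊢; exact h2)
          exact_mod_cast this
        have := (ZMod.natCast_eq_natCast_iff' t t' n).mp h3
        rwa [Nat.mod_eq_of_lt (by omega), Nat.mod_eq_of_lt (by omega)] at this
      have hcard := Finset.card_le_card_of_injOn _ hmap hinj'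
      rw [Finset.card_range] at hcard
      exact le_trans (hs ▸ min_le_right _ _) hcard
  have hcard_B : ∀ j : Fin k, (s : ℕ) ^ d ≤ (B j).card := by
    intro j
    rw [hB, Fintype.card_piFinset]
    calc (s : ℕ) ^ d = ∏ _i : Fin d, s := by simp
      _ ≤ ∏ i : Fin d, (ball (x j i)).card :=
          Finset.prod_le_prod (fun _ _ => Nat.zero_le _) (fun i _ => hcard_ball _)
  -- disjointness
  have h2dm : 2 * d * m ≤ L - 1 := Nat.mul_div_le _ _
  have hdisj : ∀ j ∈ S, ∀ j' ∈ S, j ≠ j' → Disjoint (B j) (B j') := by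
    have main : ∀ j ∈ S, ∀ j' ∈ S, j < j' → Disjoint (B j) (B j') := by
      intro j hj j' hj' hlt
      rw [Finset.disjoint_left]
      intro y hy hy'
      simp only [hB, Fintype.mem_piFinset, hball, Finset.mem_filter, Finset.mem_univ,
        true_and] at hy hy'
      have htd : tdist d n (x j) (x j') ≤ 2 * d * m := by
        calc tdist d n (x j) (x j') ≤ ∑ i, cf n (x j' i - x j i) := tdist_le_sum d n _ _
          _ ≤ ∑ _i : Fin d, (m + m) := by
              apply Finset.sum_le_sum
              intro i _
              have hsplit : x j' i - x j i = (y i - x j i) + (x j' i - y i) := by ring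
              rw [hsplit]
              refine (cf_add n _ _).trans (add_le_add (hy i) ?_)
              have : x j' i - y i = -(y i - x j' i) := by ring
              rw [this, cf_neg]
              exact hy' i
          _ = 2 * d * m := by simp; ring
      have := hsep j hj j' hj' hlt
      omega
    intro j hj j' hj' hne
    rcases lt_or_gt_of_ne hne with h | h
    · exact main j hj j' hj' h
    · exact (main j' hj' j hj h).symm
  -- counting
  have hcount : S.card * s ^ d ≤ n ^ d := by
    calc S.card * s ^ d = S.card • (s ^ d) := by simp
      _ ≤ ∑ j ∈ S, (B j).card :=
          Finset.card_nsmul_le_sum S _ _ (fun j _ => hcard_B j)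
      _ = (S.biUnion B).card := (Finset.card_biUnion hdisj).symm
      _ ≤ (Finset.univ : Finset (Fin d → ZMod n)).card := Finset.card_le_card (Finset.subset_univ _)
      _ = n ^ d := by simp [Finset.card_univ, ZMod.card]
  -- L ≤ 2 d^2 s
  have hLs : L ≤ 2 * d ^ 2 * s := by
    rcases le_or_gt n (2 * m + 1) with h | h
    · -- s = n; use nonemptiness: L ≤ d * (n-1)
      obtain ⟨j, hj⟩ := hSne
      obtain ⟨hjk, hLd⟩ := (Finset.mem_filter.mp hj).2
      have : tdist d n (x j) (x ⟨(j : ℕ) + 1, hjk⟩) ≤ d * (n - 1) := by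
        calc tdist d n (x j) (x ⟨(j : ℕ) + 1, hjk⟩)
            ≤ ∑ i, cf n (x ⟨(j : ℕ) + 1, hjk⟩ i - x j i) := tdist_le_sum d n _ _
          _ ≤ ∑ _i : Fin d, (n - 1) := by
              apply Finset.sum_le_sum
              intro i _
              have := ZMod.val_lt (x ⟨(j : ℕ) + 1, hjk⟩ i - x j i)
              have h2 : cf n _ ≤ (x ⟨(j : ℕ) + 1, hjk⟩ i - x j i).val := min_le_left _ _
              omega
          _ = d * (n - 1) := by simp [mul_comm]
      have hsn : s = n := by
        rw [hs]; exact min_eq_left h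
      have hLn : L ≤ d * (n - 1) := hLd.trans this
      rw [hsn]
      calc L ≤ d * (n - 1) := hLn
        _ ≤ d * n := Nat.mul_le_mul_left d (Nat.sub_le n 1)
        _ ≤ 2 * d ^ 2 * n := Nat.mul_le_mul_right n (by nlinarith [hd])
    · have hsval : s = 2 * m + 1 := by
        rw [hs]; exact min_eq_right h.le
      have hdm := Nat.div_add_mod (L - 1) (2 * d)
      have hmod := Nat.mod_lt (L - 1) (show 0 < 2 * d by omega)
      rw [← hm] at hdm
      have h1 : L ≤ 2 * d * m + 2 * d := by omega
      have h2 : 2 * d * m + 2 * d ≤ 2 * d ^ 2 * (2 * m + 1) := by nlinarith [hd]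
      rw [hsval]
      exact h1.trans h2
  -- final real arithmetic
  have hsR : (0:ℝ) < s := by exact_mod_cast hs1
  have hLR : (0:ℝ) < L := by exact_mod_cast hL
  have hcountR : (S.card : ℝ) ≤ ((n : ℝ) / s) ^ d := by
    rw [div_pow, le_div_iff₀ (by positivity)]
    exact_mod_cast hcount
  refine hcountR.trans (pow_le_pow_left₀ (by positivity) ?_ d)
  rw [div_le_div_iff₀ hsR hLR]
  have : (L : ℝ) * s ≤ (2 * d ^ 2 * s : ℕ) * s := by
    have : (L:ℝ) ≤ (2 * d ^ 2 * s : ℕ) := by exact_mod_cast hLs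
    nlinarith
  calc (n:ℝ) * L = (L:ℝ) * n := by ring
    _ ≤ (2 * (d:ℝ) ^ 2 * s) * n := by
        have : (L:ℝ) ≤ 2 * (d:ℝ) ^ 2 * s := by exact_mod_cast hLs
        nlinarith [show (0:ℝ) ≤ (n:ℝ) by positivity]
    _ = 2 * (d:ℝ) ^ 2 * n * s := by ring
end

section
/- For a birth-and-death Markov chain on {1,…,k+1} with upward probabilities p(j,j+1) = λ/(1+λ) for all 1 ≤ j ≤ k and downward probabilities p(j+1,j) = r_j/(1+λ) with r_j ∈ (0,1] for 1 ≤ j ≤ k−1, made reversible at k+1 with p(k+1,k) = λ/(1+λ), the reversibility measure satisfies ν(k+1) ≤ λ^{k−1} · ∏_{j=1}^{k−1} (1/r_j), and consequently the hitting time of k+1 started from 1 satisfies P_1(T_{k+1} ≤ M) ≤ M · λ^{k−1} · ∏_{j=1}^{k−1} (1/r_j) for every M ∈ ℕ. -/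
open scoped BigOperators

/-- The probability, for the Markov chain with transition matrix `p` started at `a`,
that the first hitting time of `b` is at most `M`. -/
def hitProb {S : Type*} [Fintype S] [DecidableEq S] (p : S → S → ℝ) (a b : S)
    (M : ℕ) : ℝ :=
  ∑ f : Fin (M + 1) → S,
    if f 0 = a ∧ ∃ t : Fin (M + 1), 1 ≤ (t : ℕ) ∧ f t = b then
      ∏ i : Fin M, p (f i.castSucc) (f i.succ)
    else 0


open scoped BigOperators

section PathAux

variable {S : Type*} [Fintype S] [DecidableEq S]

/-- Weight of a path. -/
def pathW (p : S → S → ℝ) {M : ℕ} (f : Fin (M + 1) → S) : ℝ :=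
  ∏ i : Fin M, p (f i.castSucc) (f i.succ)

lemma pathW_nonneg {p : S → S → ℝ} (hp : ∀ i j, 0 ≤ p i j) {M : ℕ}
    (f : Fin (M + 1) → S) : 0 ≤ pathW p f :=
  Finset.prod_nonneg fun _ _ => hp _ _

lemma pathW_cons (p : S → S → ℝ) {M : ℕ} (x : S) (g : Fin (M + 1) → S) :
    pathW p (Fin.cons x g) = p x (g 0) * pathW p g := by
  unfold pathW
  rw [Fin.prod_univ_succ]
  have h1 : ∀ i : Fin M, p ((Fin.cons x g : Fin (M + 2) → S) (i.succ).castSucc)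
        ((Fin.cons x g : Fin (M + 2) → S) (i.succ).succ)
      = p (g i.castSucc) (g i.succ) := by
    intro i
    rw [← Fin.succ_castSucc, Fin.cons_succ, Fin.cons_succ]
  simp only [h1]
  congr 1

lemma sum_pi_succ {M : ℕ} (F : (Fin (M + 2) → S) → ℝ) :
    ∑ f : Fin (M + 2) → S, F f = ∑ x : S, ∑ g : Fin (M + 1) → S, F (Fin.cons x g) := by
  calc ∑ f : Fin (M + 2) → S, F f
      = ∑ y : S × (Fin (M + 1) → S), F (Fin.cons y.1 y.2) :=
        Fintype.sum_equiv ((Fin.consEquiv (fun _ => S)).symm) _ _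
          (fun f => congrArg F (Fin.cons_self_tail f).symm)
    _ = ∑ x : S, ∑ g : Fin (M + 1) → S, F (Fin.cons x g) :=
        Fintype.sum_prod_type _

lemma sum_pi_one (F : (Fin 1 → S) → ℝ) :
    ∑ f : Fin 1 → S, F f = ∑ x : S, F (fun _ => x) := by
  refine Fintype.sum_equiv (Equiv.funUnique (Fin 1) S) _ _ fun f => ?_
  congr 1
  funext i
  rw [Subsingleton.elim i 0]
  rfl

lemma group_first {M : ℕ} (h : S → ℝ) (T : (Fin (M + 1) → S) → ℝ) :
    ∑ g : Fin (M + 1) → S, h (g 0) * T g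
      = ∑ c : S, h c * ∑ g : Fin (M + 1) → S, (if g 0 = c then T g else 0) := by
  have : ∀ c : S, h c * ∑ g : Fin (M + 1) → S, (if g 0 = c then T g else 0)
      = ∑ g : Fin (M + 1) → S, (if g 0 = c then h c * T g else 0) := by
    intro c
    rw [Finset.mul_sum]
    refine Finset.sum_congr rfl fun g _ => ?_
    split <;> simp
  simp_rw [this]
  rw [Finset.sum_comm]
  refine Finset.sum_congr rfl fun g _ => ?_
  have : ∀ c : S, (if g 0 = c then h c * T g else 0)
      = (if g 0 = c then (fun c => h c * T g) c else 0) := fun c => rfl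
  simp_rw [this, Finset.sum_ite_eq, Finset.mem_univ, if_true]

lemma sum_pathW (p : S → S → ℝ) (hst : ∀ i, ∑ j, p i j = 1) :
    ∀ (M : ℕ) (a : S), ∑ f : Fin (M + 1) → S, (if f 0 = a then pathW p f else 0) = 1 := by
  intro M
  induction M with
  | zero =>
    intro a
    rw [sum_pi_one]
    simp [pathW]
  | succ M ih =>
    intro a
    rw [sum_pi_succ]
    have : ∀ x : S, ∑ g : Fin (M + 1) → S,
        (if (Fin.cons x g : Fin (M + 2) → S) 0 = a then pathW p (Fin.cons x g) else 0)
        = if x = a then ∑ g : Fin (M + 1) → S, p x (g 0) * pathW p g else 0 := by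
      intro x
      by_cases hx : x = a
      · simp only [Fin.cons_zero, hx, if_true]
        exact Finset.sum_congr rfl fun g _ => by rw [pathW_cons]
      · simp [Fin.cons_zero, hx]
    simp_rw [this, Finset.sum_ite_eq' Finset.univ a, Finset.mem_univ, if_true]
    rw [group_first (p a)]
    have : ∀ c : S, p a c * ∑ g : Fin (M + 1) → S, (if g 0 = c then pathW p g else 0)
        = p a c := fun c => by rw [ih c, mul_one]
    simp_rw [this]
    exact hst a

lemma sum_path_fixed (p : S → S → ℝ) (hst : ∀ i, ∑ j, p i j = 1) :
    ∀ (M m : ℕ) (hm : m < M + 1) (a b : S),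
      ∑ f : Fin (M + 1) → S, (if f 0 = a ∧ f ⟨m, hm⟩ = b then pathW p f else 0)
        = (Matrix.of p ^ m) a b := by
  intro M
  induction M with
  | zero =>
    intro m hm a b
    interval_cases m
    rw [sum_pi_one]
    rcases eq_or_ne a b with h | h
    · subst h
      simp [pathW, Matrix.one_apply]
    · rw [pow_zero, Matrix.one_apply_ne h]
      refine Finset.sum_eq_zero fun x _ => ?_
      exact if_neg fun hc => h (hc.1.symm.trans hc.2)
  | succ M ih =>
    intro m hm a b
    match m with
    | 0 =>
      rcases eq_or_ne a b with h | h
      · subst h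
        have key : ∀ f : Fin (M + 2) → S,
            (if f 0 = a ∧ f ⟨0, hm⟩ = a then pathW p f else 0)
            = (if f 0 = a then pathW p f else 0) := by
          intro f
          by_cases hf : f 0 = a
          · rw [if_pos ⟨hf, hf⟩, if_pos hf]
          · rw [if_neg (fun hc => hf hc.1), if_neg hf]
        simp_rw [key]
        rw [sum_pathW p hst]
        simp [Matrix.one_apply]
      · rw [pow_zero, Matrix.one_apply_ne h]
        refine Finset.sum_eq_zero fun f _ => ?_
        exact if_neg fun hc => h (hc.1.symm.trans hc.2)
    | m + 1 =>
      have hm' : m < M + 1 := by omega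
      have hmk : (⟨m + 1, hm⟩ : Fin (M + 2)) = (⟨m, hm'⟩ : Fin (M + 1)).succ := rfl
      rw [sum_pi_succ]
      have key : ∀ x : S, ∑ g : Fin (M + 1) → S,
          (if (Fin.cons x g : Fin (M + 2) → S) 0 = a ∧
              (Fin.cons x g : Fin (M + 2) → S) ⟨m + 1, hm⟩ = b
            then pathW p (Fin.cons x g) else 0)
          = if x = a then
              ∑ g : Fin (M + 1) → S, p x (g 0) * (if g ⟨m, hm'⟩ = b then pathW p g else 0)
            else 0 := by
        intro x
        by_cases hx : x = a
        · simp only [hx, if_true]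
          refine Finset.sum_congr rfl fun g _ => ?_
          rw [hmk, Fin.cons_succ, Fin.cons_zero, pathW_cons]
          by_cases hg : g ⟨m, hm'⟩ = b
          · rw [if_pos ⟨rfl, hg⟩, if_pos hg]
          · rw [if_neg (fun h => hg h.2), if_neg hg, mul_zero]
        · simp [Fin.cons_zero, hx]
      simp_rw [key, Finset.sum_ite_eq' Finset.univ a, Finset.mem_univ, if_true]
      rw [group_first (p a)]
      have : ∀ c : S, p a c * ∑ g : Fin (M + 1) → S,
          (if g 0 = c then (if g ⟨m, hm'⟩ = b then pathW p g else 0) else 0)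
          = p a c * (Matrix.of p ^ m) c b := by
        intro c
        congr 1
        rw [← ih m hm' c b]
        refine Finset.sum_congr rfl fun g _ => ?_
        by_cases h1 : g 0 = c <;> by_cases h2 : g ⟨m, hm'⟩ = b <;>
          simp [h1, h2]
      simp_rw [this]
      rw [pow_succ' (Matrix.of p) m, Matrix.mul_apply]
      rfl

lemma pow_entry_nonneg_rowsum (p : S → S → ℝ) (hp : ∀ i j, 0 ≤ p i j)
    (hst : ∀ i, ∑ j, p i j = 1) (m : ℕ) :
    (∀ a b, 0 ≤ (Matrix.of p ^ m) a b) ∧ (∀ a, ∑ b, (Matrix.of p ^ m) a b = 1) := by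
  induction m with
  | zero =>
    constructor
    · intro a b
      simp only [pow_zero, Matrix.one_apply]
      split <;> norm_num
    · intro a
      simp [Matrix.one_apply]
  | succ m ih =>
    constructor
    · intro a b
      rw [pow_succ, Matrix.mul_apply]
      exact Finset.sum_nonneg fun c _ => mul_nonneg (ih.1 a c) (hp c b)
    · intro a
      simp_rw [pow_succ, Matrix.mul_apply]
      rw [Finset.sum_comm]
      have : ∀ c : S, ∑ b : S, (Matrix.of p ^ m) a c * Matrix.of p c b
          = (Matrix.of p ^ m) a c := by
        intro c
        rw [← Finset.mul_sum]
        have : ∑ b : S, Matrix.of p c b = 1 := hst c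
        rw [this, mul_one]
      simp_rw [this]
      exact ih.2 a

lemma pow_entry_le_one (p : S → S → ℝ) (hp : ∀ i j, 0 ≤ p i j)
    (hst : ∀ i, ∑ j, p i j = 1) (m : ℕ) (a b : S) :
    (Matrix.of p ^ m) a b ≤ 1 := by
  obtain ⟨h1, h2⟩ := pow_entry_nonneg_rowsum p hp hst m
  calc (Matrix.of p ^ m) a b ≤ ∑ c, (Matrix.of p ^ m) a c :=
        Finset.single_le_sum (fun c _ => h1 a c) (Finset.mem_univ b)
    _ = 1 := h2 a

end PathAux
/-- For the birth-and-death chain on `{1, …, k+1}` (encoded as `Fin (k+1)`, index `i`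
being state `i+1`) with upward probabilities `λ/(1+λ)`, downward probabilities
`r_j/(1+λ)` for `1 ≤ j ≤ k−1`, and reversibilized top `p(k+1,k) = λ/(1+λ)`,
the reversibility measure satisfies `ν(k+1) ≤ λ^{k−1} ∏_{j=1}^{k−1} 1/r_j`,
and `P_1(T_{k+1} ≤ M) ≤ M · λ^{k−1} ∏_{j=1}^{k−1} 1/r_j` for every `M`. -/
theorem stmt6 (k : ℕ) (hk : 1 ≤ k) (lam : ℝ) (hlam : 0 < lam) (r : ℕ → ℝ)
    (hr : ∀ j, 1 ≤ j → j ≤ k - 1 → 0 < r j ∧ r j ≤ 1)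
    (p : Fin (k + 1) → Fin (k + 1) → ℝ)
    (hp : ∀ i j, 0 ≤ p i j) (hst : ∀ i, ∑ j, p i j = 1)
    (hbd : ∀ i j : Fin (k + 1), (i : ℕ) ≠ j → (i : ℕ) + 1 ≠ j → (j : ℕ) + 1 ≠ i →
      p i j = 0)
    (hup : ∀ i : Fin k, p i.castSucc i.succ = lam / (1 + lam))
    (hdown : ∀ i : Fin k, (i : ℕ) + 1 ≤ k - 1 →
      p i.succ i.castSucc = r ((i : ℕ) + 1) / (1 + lam))
    (htop : ∀ i : Fin k, (i : ℕ) = k - 1 → p i.succ i.castSucc = lam / (1 + lam)) :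
    (∏ i : Fin k, p i.castSucc i.succ / p i.succ i.castSucc)
        ≤ lam ^ (k - 1) * ∏ j ∈ Finset.Icc 1 (k - 1), (1 / r j)
    ∧ ∀ M : ℕ, hitProb p 0 (Fin.last k) M
        ≤ M * lam ^ (k - 1) * ∏ j ∈ Finset.Icc 1 (k - 1), (1 / r j) := by
  have h1lam : (0:ℝ) < 1 + lam := by linarith
  have hupos : 0 < lam / (1 + lam) := div_pos hlam h1lam
  have hdpos : ∀ i : Fin k, 0 < p i.succ i.castSucc := by
    intro i
    by_cases h : (i : ℕ) + 1 ≤ k - 1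
    · rw [hdown i h]
      exact div_pos (hr ((i:ℕ)+1) (Nat.succ_le_succ (Nat.zero_le _)) h).1 h1lam
    · have hik : (i:ℕ) = k - 1 := by have := i.isLt; omega
      rw [htop i hik]; exact hupos
  set q : ℕ → ℝ := fun j => if h : j < k then
      p ((⟨j, h⟩ : Fin k)).castSucc ((⟨j, h⟩ : Fin k)).succ /
        p ((⟨j, h⟩ : Fin k)).succ ((⟨j, h⟩ : Fin k)).castSucc else 1 with hq
  have hqi : ∀ i : Fin k, q (i : ℕ) = p i.castSucc i.succ / p i.succ i.castSucc := by
    intro i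
    simp only [hq]
    rw [dif_pos i.isLt]
  have hq0 : ∀ j, 0 ≤ q j := by
    intro j
    simp only [hq]
    split
    · exact div_nonneg (hp _ _) (hp _ _)
    · norm_num
  set N : ℕ → ℝ := fun n => ∏ j ∈ Finset.range n, q j with hNdef
  have hN0 : ∀ n, 0 ≤ N n := fun n => Finset.prod_nonneg fun j _ => hq0 j
  have hNsucc : ∀ n, N (n+1) = N n * q n := fun n => Finset.prod_range_succ q n
  have hN00 : N 0 = 1 := by simp [hNdef]
  have db1 : ∀ i : Fin k, N ((i.castSucc : Fin (k+1)) : ℕ) * p i.castSucc i.succ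
      = N ((i.succ : Fin (k+1)) : ℕ) * p i.succ i.castSucc := by
    intro i
    have hcs : ((i.castSucc : Fin (k+1)) : ℕ) = (i : ℕ) := rfl
    have hss : ((i.succ : Fin (k+1)) : ℕ) = (i : ℕ) + 1 := rfl
    rw [hcs, hss, hNsucc, hqi i, mul_assoc, div_mul_cancel₀ _ (ne_of_gt (hdpos i))]
  have key : ∀ (i : Fin k) (a b : Fin (k+1)), (a:ℕ) = (i:ℕ) → (b:ℕ) = (i:ℕ) + 1 →
      N (a:ℕ) * p a b = N (b:ℕ) * p b a := by
    intro i a b hA hB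
    have ha : a = i.castSucc := Fin.ext hA
    have hb : b = i.succ := Fin.ext hB
    subst ha
    subst hb
    exact db1 i
  have db : ∀ a b : Fin (k+1), N (a:ℕ) * p a b = N (b:ℕ) * p b a := by
    intro a b
    rcases Nat.lt_trichotomy (a:ℕ) (b:ℕ) with h | h | h
    · by_cases hb2 : (b:ℕ) = (a:ℕ) + 1
      · have hak : (a:ℕ) < k := by have := b.isLt; omega
        exact key ⟨(a:ℕ), hak⟩ a b rfl hb2
      · rw [hbd a b (by omega) (by omega) (by omega),
          hbd b a (by omega) (by omega) (by omega), mul_zero, mul_zero]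
    · have : a = b := Fin.ext h
      subst this; rfl
    · by_cases hb2 : (a:ℕ) = (b:ℕ) + 1
      · have hbk : (b:ℕ) < k := by have := a.isLt; omega
        exact (key ⟨(b:ℕ), hbk⟩ b a rfl hb2).symm
      · rw [hbd a b (by omega) (by omega) (by omega),
          hbd b a (by omega) (by omega) (by omega), mul_zero, mul_zero]
  have dbm : ∀ (m : ℕ) (a b : Fin (k+1)),
      N (a:ℕ) * (Matrix.of p ^ m) a b = N (b:ℕ) * (Matrix.of p ^ m) b a := by
    intro m
    induction m with
    | zero =>
      intro a b
      rcases eq_or_ne a b with h | h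
      · subst h; rfl
      · simp [pow_zero, Matrix.one_apply_ne h, Matrix.one_apply_ne (Ne.symm h)]
    | succ m ih =>
      intro a b
      have e1 : (Matrix.of p ^ (m+1)) a b = ∑ c, p a c * (Matrix.of p ^ m) c b := by
        rw [pow_succ' (Matrix.of p) m, Matrix.mul_apply]; rfl
      have e2 : (Matrix.of p ^ (m+1)) b a = ∑ c, (Matrix.of p ^ m) b c * p c a := by
        rw [pow_succ (Matrix.of p) m, Matrix.mul_apply]; rfl
      rw [e1, e2, Finset.mul_sum, Finset.mul_sum]
      refine Finset.sum_congr rfl fun c _ => ?_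
      have h1 := db a c
      have h2 := ih c b
      linear_combination (Matrix.of p ^ m) c b * h1 + p c a * h2
  have hPle : ∀ (m : ℕ) (b : Fin (k+1)), (Matrix.of p ^ m) 0 b ≤ N (b:ℕ) := by
    intro m b
    have h := dbm m 0 b
    have h0 : ((0 : Fin (k+1)) : ℕ) = 0 := rfl
    rw [h0, hN00, one_mul] at h
    rw [h]
    calc N (b:ℕ) * (Matrix.of p ^ m) b 0 ≤ N (b:ℕ) * 1 :=
          mul_le_mul_of_nonneg_left (pow_entry_le_one p hp hst m b 0) (hN0 _)
      _ = N (b:ℕ) := mul_one _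
  have hk1 : k - 1 + 1 = k := Nat.succ_pred_eq_of_pos hk
  have hNk : N k = lam ^ (k - 1) * ∏ j ∈ Finset.Icc 1 (k - 1), (1 / r j) := by
    have hqtop : q (k - 1) = 1 := by
      have hlt : k - 1 < k := by omega
      simp only [hq]
      rw [dif_pos hlt]
      have hv : ((⟨k-1, hlt⟩ : Fin k) : ℕ) = k - 1 := rfl
      rw [hup, htop _ hv, div_self (ne_of_gt hupos)]
    have hqlow : ∀ j ∈ Finset.range (k-1), q j = lam * (1 / r (j+1)) := by
      intro j hj
      rw [Finset.mem_range] at hj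
      have hlt : j < k := by omega
      have hv : ((⟨j, hlt⟩ : Fin k) : ℕ) = j := rfl
      simp only [hq]
      rw [dif_pos hlt, hup, hdown _ (by rw [hv]; omega)]
      rw [hv, div_div_div_comm, div_self (ne_of_gt h1lam), div_one, div_eq_mul_one_div]
    have hIcc : ∏ j ∈ Finset.Icc 1 (k-1), (1 / r j)
        = ∏ j ∈ Finset.range (k-1), (1 / r (j+1)) := by
      rw [← Finset.Ico_add_one_right_eq_Icc, Finset.prod_Ico_eq_prod_range, Nat.add_sub_cancel]
      exact Finset.prod_congr rfl fun j _ => by rw [add_comm]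
    have h1 := hNsucc (k-1)
    rw [hk1] at h1
    rw [h1, hqtop, mul_one,
      show N (k-1) = ∏ j ∈ Finset.range (k-1), q j from rfl,
      Finset.prod_congr rfl hqlow, Finset.prod_mul_distrib, Finset.prod_const,
      Finset.card_range, hIcc]
  have hprod : (∏ i : Fin k, p i.castSucc i.succ / p i.succ i.castSucc) = N k := by
    simp only [hNdef]
    rw [← Fin.prod_univ_eq_prod_range q k]
    exact Finset.prod_congr rfl fun i _ => (hqi i).symm
  constructor
  · rw [hprod, hNk]
  · intro M
    have hWnn : ∀ f : Fin (M+1) → Fin (k+1), 0 ≤ pathW p f := fun f => pathW_nonneg hp f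
    have hhit : hitProb p 0 (Fin.last k) M
        = ∑ f : Fin (M+1) → Fin (k+1),
            (if f 0 = 0 ∧ ∃ t : Fin (M + 1), 1 ≤ (t : ℕ) ∧ f t = Fin.last k
              then pathW p f else 0) := rfl
    have step1 : hitProb p 0 (Fin.last k) M
        ≤ ∑ f : Fin (M+1) → Fin (k+1), ∑ t : Fin (M+1),
            (if 1 ≤ (t:ℕ) ∧ f 0 = 0 ∧ f t = Fin.last k then pathW p f else 0) := by
      rw [hhit]
      refine Finset.sum_le_sum fun f _ => ?_
      by_cases hf : f 0 = 0 ∧ ∃ t : Fin (M + 1), 1 ≤ (t : ℕ) ∧ f t = Fin.last k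
      · rw [if_pos hf]
        obtain ⟨h0, t, ht1, htb⟩ := hf
        calc pathW p f
            = (if 1 ≤ (t:ℕ) ∧ f 0 = 0 ∧ f t = Fin.last k then pathW p f else 0) :=
              (if_pos ⟨ht1, h0, htb⟩).symm
          _ ≤ ∑ t' : Fin (M+1),
              (if 1 ≤ (t':ℕ) ∧ f 0 = 0 ∧ f t' = Fin.last k then pathW p f else 0) :=
              Finset.single_le_sum
                (f := fun t' : Fin (M+1) =>
                  if 1 ≤ (t':ℕ) ∧ f 0 = 0 ∧ f t' = Fin.last k then pathW p f else 0)
                (fun t' _ => by split_ifs; exacts [hWnn f, le_rfl])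
                (Finset.mem_univ t)
      · rw [if_neg hf]
        exact Finset.sum_nonneg fun t _ => by split_ifs; exacts [hWnn f, le_rfl]
    have step2 : ∑ f : Fin (M+1) → Fin (k+1), ∑ t : Fin (M+1),
            (if 1 ≤ (t:ℕ) ∧ f 0 = 0 ∧ f t = Fin.last k then pathW p f else 0)
        = ∑ t : Fin (M+1),
            (if 1 ≤ (t:ℕ) then (Matrix.of p ^ (t:ℕ)) 0 (Fin.last k) else 0) := by
      rw [Finset.sum_comm]
      refine Finset.sum_congr rfl fun t _ => ?_
      by_cases ht : 1 ≤ (t:ℕ)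
      · rw [if_pos ht, ← sum_path_fixed p hst M (t:ℕ) t.isLt 0 (Fin.last k)]
        refine Finset.sum_congr rfl fun f _ => ?_
        have het : (⟨(t:ℕ), t.isLt⟩ : Fin (M+1)) = t := Fin.eta t t.isLt
        rw [het]
        by_cases hc : f 0 = 0 ∧ f t = Fin.last k
        · rw [if_pos ⟨ht, hc.1, hc.2⟩, if_pos hc]
        · rw [if_neg (fun h => hc ⟨h.2.1, h.2.2⟩), if_neg hc]
      · rw [if_neg ht]
        exact Finset.sum_eq_zero fun f _ => if_neg (fun h => ht h.1)
    have step3 : ∑ t : Fin (M+1),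
            (if 1 ≤ (t:ℕ) then (Matrix.of p ^ (t:ℕ)) 0 (Fin.last k) else 0)
        ≤ (M : ℝ) * N k := by
      have hb : ((Fin.last k : Fin (k+1)) : ℕ) = k := rfl
      calc ∑ t : Fin (M+1), (if 1 ≤ (t:ℕ) then (Matrix.of p ^ (t:ℕ)) 0 (Fin.last k) else 0)
          ≤ ∑ t : Fin (M+1), (if 1 ≤ (t:ℕ) then N k else 0) := by
            refine Finset.sum_le_sum fun t _ => ?_
            split_ifs with h
            · have := hPle (t:ℕ) (Fin.last k); rwa [hb] at this
            · exact le_rfl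
        _ = (M : ℝ) * N k := by
            rw [Fin.sum_univ_succ]
            have h0 : ¬ (1 ≤ ((0 : Fin (M+1)) : ℕ)) := by simp
            rw [if_neg h0, zero_add]
            rw [Finset.sum_congr rfl (fun (i : Fin M) _ =>
              if_pos (by simp [Fin.val_succ] : 1 ≤ ((i.succ : Fin (M+1)) : ℕ)))]
            rw [Finset.sum_const, Finset.card_univ, Fintype.card_fin, nsmul_eq_mul]
    calc hitProb p 0 (Fin.last k) M ≤ _ := step1
      _ = _ := step2
      _ ≤ (M : ℝ) * N k := step3
      _ = M * lam ^ (k - 1) * ∏ j ∈ Finset.Icc 1 (k - 1), (1 / r j) := by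
          rw [hNk, ← mul_assoc]
end

section
/- Let p ∈ (0,1) and consider the one-dimensional birth-and-death chain on {1,…,k+1} where from each state j ≤ k the chain moves to j+1 with probability p and the hitting time T_{k+1} of k+1 is considered. If at every state j the probability of moving up is exactly p = λ/(1+λ) and, for each 2 ≤ j ≤ k, the probability of moving down is at least 1/((1+λ)·2d·ℓ_{j−1}) where ℓ_1,…,ℓ_{k−1} are positive integers with ∏_j ℓ_j ≤ K^{n^d} and k = ⌈μn^d⌉, then for every M ∈ ℕ, P_1(T_{k+1} ≤ M) ≤ (M/(1∧(2dλ))) · (K·(2dλ)^μ)^{n^d}. -/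
open scoped BigOperators

section Aux
variable {S : Type*} [Fintype S] [DecidableEq S] (p : S → S → ℝ)

def st17pw (m : ℕ) (g : Fin (m + 1) → S) : ℝ := ∏ i : Fin m, p (g i.castSucc) (g i.succ)

omit [Fintype S] [DecidableEq S] in
lemma st17pw_cons (m : ℕ) (x : S) (h : Fin (m + 1) → S) :
    st17pw p (m + 1) (Fin.cons x h) = p x (h 0) * st17pw p m h := by
  unfold st17pw
  rw [Fin.prod_univ_succ]
  congr 1

lemma st17sum_cons (m : ℕ) (F : (Fin (m + 2) → S) → ℝ) :
    ∑ g : Fin (m + 2) → S, F g = ∑ x : S, ∑ h : Fin (m + 1) → S, F (Fin.cons x h) := by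
  rw [← (Fin.consEquiv fun _ => S).sum_comp F, Fintype.sum_prod_type]
  rfl

end Aux

section Aux2
variable {S : Type*} [Fintype S] [DecidableEq S] (p : S → S → ℝ)

lemma st17outer (m : ℕ) (a : S) (G : S → (Fin (m + 1) → S) → ℝ) :
    (∑ x : S, ∑ h : Fin (m + 1) → S, if x = a then G x h else 0)
      = ∑ h : Fin (m + 1) → S, G a h := by
  rw [Finset.sum_comm]
  refine Finset.sum_congr rfl fun h _ => ?_
  rw [Finset.sum_ite_eq']
  simp

lemma st17split (m : ℕ) (a : S) (G : (Fin (m + 1) → S) → ℝ) :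
    (∑ h : Fin (m + 1) → S, p a (h 0) * G h)
      = ∑ y : S, p a y * ∑ h : Fin (m + 1) → S, (if h 0 = y then G h else 0) := by
  calc ∑ h : Fin (m + 1) → S, p a (h 0) * G h
      = ∑ h : Fin (m + 1) → S, ∑ y : S, (if h 0 = y then p a y * G h else 0) := by
        refine Finset.sum_congr rfl fun h _ => ?_
        rw [Finset.sum_ite_eq]
        simp
    _ = ∑ y : S, ∑ h : Fin (m + 1) → S, (if h 0 = y then p a y * G h else 0) :=
        Finset.sum_comm
    _ = ∑ y : S, p a y * ∑ h : Fin (m + 1) → S, (if h 0 = y then G h else 0) := by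
        refine Finset.sum_congr rfl fun y _ => ?_
        rw [Finset.mul_sum]
        refine Finset.sum_congr rfl fun h _ => ?_
        split <;> simp

lemma st17L1 (hst : ∀ i, ∑ j, p i j = 1) : ∀ (m : ℕ) (a : S),
    (∑ g : Fin (m + 1) → S, if g 0 = a then st17pw p m g else 0) = 1 := by
  intro m
  induction m with
  | zero =>
    intro a
    rw [← ((Equiv.funUnique (Fin 1) S).symm.sum_comp
      (fun g => if g 0 = a then st17pw p 0 g else 0))]
    simp [st17pw]
  | succ m ih =>
    intro a
    rw [st17sum_cons]
    have h1 : ∀ x : S, ∀ h : Fin (m + 1) → S,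
        (if (Fin.cons x h : Fin (m + 2) → S) 0 = a then st17pw p (m + 1) (Fin.cons x h) else 0)
          = if x = a then p x (h 0) * st17pw p m h else 0 := by
      intro x h; rw [Fin.cons_zero, st17pw_cons]
    simp_rw [h1]
    rw [st17outer]
    rw [st17split p m a (fun h => st17pw p m h)]
    have h2 : ∀ y : S, (∑ h : Fin (m + 1) → S, if h 0 = y then st17pw p m h else 0) = 1 :=
      fun y => ih y
    simp_rw [h2, mul_one]
    exact hst a

end Aux2

section Aux3
variable {S : Type*} [Fintype S] [DecidableEq S] (p : S → S → ℝ)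

lemma hitProb_eq (a b : S) (M : ℕ) : hitProb p a b M
    = ∑ f : Fin (M + 1) → S,
        if f 0 = a ∧ ∃ t : Fin (M + 1), 1 ≤ (t : ℕ) ∧ f t = b then st17pw p M f else 0 := rfl

lemma st17hit_zero (a b : S) : hitProb p a b 0 = 0 := by
  rw [hitProb_eq]
  refine Finset.sum_eq_zero fun f _ => ?_
  rw [if_neg]
  rintro ⟨-, t, ht, -⟩
  omega

lemma st17hit_succ (hst : ∀ i, ∑ j, p i j = 1) (m : ℕ) (a b : S) :
    hitProb p a b (m + 1) = ∑ y, p a y * (if y = b then 1 else hitProb p y b m) := by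
  rw [hitProb_eq, st17sum_cons]
  have key : ∀ (x : S) (h : Fin (m + 1) → S),
      (if (Fin.cons x h : Fin (m + 2) → S) 0 = a ∧
          (∃ t : Fin (m + 2), 1 ≤ (t : ℕ) ∧ (Fin.cons x h : Fin (m + 2) → S) t = b) then
        st17pw p (m + 1) (Fin.cons x h) else 0)
      = if x = a then p x (h 0) * (if (∃ s : Fin (m + 1), h s = b) then st17pw p m h else 0)
        else 0 := by
    intro x h
    by_cases hx : x = a
    · have hiff : (∃ t : Fin (m + 2), 1 ≤ (t : ℕ) ∧ (Fin.cons x h : Fin (m + 2) → S) t = b)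
          ↔ (∃ s : Fin (m + 1), h s = b) := by
        constructor
        · rintro ⟨t, ht1, ht2⟩
          have ht0 : t ≠ 0 := by intro h0; rw [h0] at ht1; simp at ht1
          obtain ⟨s, rfl⟩ := Fin.eq_succ_of_ne_zero ht0
          exact ⟨s, by simpa [Fin.cons_succ] using ht2⟩
        · rintro ⟨s, hs⟩
          exact ⟨s.succ, by simp [Fin.cons_succ, hs, Nat.succ_le_of_lt s.succ_pos]⟩
      by_cases hex : ∃ s : Fin (m + 1), h s = b
      · rw [if_pos ⟨by simp [hx], hiff.mpr hex⟩, if_pos hx, if_pos hex, st17pw_cons]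
      · rw [if_neg (by rintro ⟨-, hex2⟩; exact hex (hiff.mp hex2)), if_pos hx, if_neg hex,
          mul_zero]
    · rw [if_neg (by rintro ⟨h0, -⟩; exact hx (by simpa using h0)), if_neg hx]
  simp_rw [key]
  rw [st17outer, st17split p m a (fun h => if (∃ s : Fin (m + 1), h s = b) then st17pw p m h else 0)]
  refine Finset.sum_congr rfl fun y _ => ?_
  congr 1
  by_cases hyb : y = b
  · rw [if_pos hyb]
    subst hyb
    rw [← st17L1 p hst m y]
    refine Finset.sum_congr rfl fun h _ => ?_
    by_cases h0 : h 0 = y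
    · rw [if_pos h0, if_pos ⟨0, h0⟩, if_pos h0]
    · rw [if_neg h0, if_neg h0]
  · rw [if_neg hyb, hitProb_eq]
    refine Finset.sum_congr rfl fun h _ => ?_
    by_cases h0 : h 0 = y
    · rw [if_pos h0]
      have hiff2 : (∃ s : Fin (m + 1), h s = b) ↔ (∃ t : Fin (m + 1), 1 ≤ (t : ℕ) ∧ h t = b) := by
        constructor
        · rintro ⟨s, hs⟩
          have : s ≠ 0 := by rintro rfl; exact hyb (h0 ▸ hs ▸ rfl)
          exact ⟨s, Nat.one_le_iff_ne_zero.mpr (fun hv => this (Fin.ext hv)), hs⟩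
        · rintro ⟨t, -, ht⟩; exact ⟨t, ht⟩
      by_cases hex : ∃ s : Fin (m + 1), h s = b
      · rw [if_pos hex, if_pos ⟨h0, hiff2.mp hex⟩]
      · rw [if_neg hex, if_neg (by rintro ⟨-, hex2⟩; exact hex (hiff2.mpr hex2))]
    · rw [if_neg h0, if_neg (by rintro ⟨h0', -⟩; exact h0 h0')]

end Aux3

section Aux4
variable {S : Type*} [Fintype S] [DecidableEq S] (p : S → S → ℝ)

def st17q : ℕ → S → S → ℝ
  | 0 => fun a b => if a = b then 1 else 0
  | (t + 1) => fun a b => ∑ x, p a x * st17q t x b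

lemma st17q_nonneg (hp : ∀ i j, 0 ≤ p i j) : ∀ (t : ℕ) (a b : S), 0 ≤ st17q p t a b := by
  intro t
  induction t with
  | zero => intro a b; simp only [st17q]; split <;> norm_num
  | succ t ih =>
    intro a b
    exact Finset.sum_nonneg fun x _ => mul_nonneg (hp a x) (ih x b)

lemma st17q_rowsum (hst : ∀ i, ∑ j, p i j = 1) : ∀ (t : ℕ) (a : S),
    (∑ b, st17q p t a b) = 1 := by
  intro t
  induction t with
  | zero => intro a; simp only [st17q]; rw [Finset.sum_ite_eq]; simp
  | succ t ih =>
    intro a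
    simp only [st17q]
    rw [Finset.sum_comm]
    calc (∑ x, ∑ b, p a x * st17q p t x b) = ∑ x, p a x * ∑ b, st17q p t x b := by
          simp_rw [Finset.mul_sum]
      _ = 1 := by simp_rw [ih, mul_one]; exact hst a

lemma st17q_succ_right : ∀ (t : ℕ) (a b : S),
    st17q p (t + 1) a b = ∑ x, st17q p t a x * p x b := by
  intro t
  induction t with
  | zero =>
    intro a b
    simp only [st17q]
    simp_rw [mul_ite, mul_one, mul_zero, ite_mul, one_mul, zero_mul]
    rw [Finset.sum_ite_eq', Finset.sum_ite_eq]
    simp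
  | succ t ih =>
    intro a b
    show (∑ x, p a x * st17q p (t + 1) x b) = ∑ x, st17q p (t + 1) a x * p x b
    calc (∑ x, p a x * st17q p (t + 1) x b)
        = ∑ x, p a x * ∑ y, st17q p t x y * p y b := by simp_rw [ih]
      _ = ∑ y, (∑ x, p a x * st17q p t x y) * p y b := by
          simp_rw [Finset.mul_sum, Finset.sum_mul, mul_assoc]
          exact Finset.sum_comm
      _ = ∑ y, st17q p (t + 1) a y * p y b := rfl

lemma st17q_rev (nu : S → ℝ) (hdb : ∀ a b, nu a * p a b = nu b * p b a) :
    ∀ (t : ℕ) (a b : S), nu a * st17q p t a b = nu b * st17q p t b a := by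
  intro t
  induction t with
  | zero =>
    intro a b
    simp only [st17q]
    by_cases hab : a = b
    · subst hab; rfl
    · rw [if_neg hab, if_neg (Ne.symm hab)]
      simp
  | succ t ih =>
    intro a b
    have step : ∀ x : S, nu a * (p a x * st17q p t x b) = nu b * (st17q p t b x * p x a) := by
      intro x
      calc nu a * (p a x * st17q p t x b) = (nu a * p a x) * st17q p t x b := by ring
        _ = (nu x * p x a) * st17q p t x b := by rw [hdb a x]
        _ = (nu x * st17q p t x b) * p x a := by ring
        _ = (nu b * st17q p t b x) * p x a := by rw [ih x b]
        _ = nu b * (st17q p t b x * p x a) := by ring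
    calc nu a * st17q p (t + 1) a b
        = nu a * ∑ x, p a x * st17q p t x b := rfl
      _ = ∑ x, nu a * (p a x * st17q p t x b) := by rw [Finset.mul_sum]
      _ = ∑ x, nu b * (st17q p t b x * p x a) := Finset.sum_congr rfl fun x _ => step x
      _ = nu b * ∑ x, st17q p t b x * p x a := by rw [Finset.mul_sum]
      _ = nu b * st17q p (t + 1) b a := by rw [st17q_succ_right]

lemma st17hit_le (hp : ∀ i j, 0 ≤ p i j) (hst : ∀ i, ∑ j, p i j = 1) (b : S) :
    ∀ (M : ℕ) (a : S), hitProb p a b M ≤ ∑ t ∈ Finset.range M, st17q p (t + 1) a b := by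
  intro M
  induction M with
  | zero => intro a; rw [st17hit_zero]; simp
  | succ M ih =>
    intro a
    rw [st17hit_succ p hst]
    have step : ∀ y : S, p a y * (if y = b then 1 else hitProb p y b M)
        ≤ p a y * ((if y = b then (1:ℝ) else 0) + ∑ t ∈ Finset.range M, st17q p (t + 1) y b) := by
      intro y
      refine mul_le_mul_of_nonneg_left ?_ (hp a y)
      by_cases hyb : y = b
      · rw [if_pos hyb, if_pos hyb]
        have : (0:ℝ) ≤ ∑ t ∈ Finset.range M, st17q p (t + 1) y b :=
          Finset.sum_nonneg fun t _ => st17q_nonneg p hp _ y b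
        linarith
      · rw [if_neg hyb, if_neg hyb, zero_add]
        exact ih y
    calc (∑ y, p a y * (if y = b then 1 else hitProb p y b M))
        ≤ ∑ y, p a y * ((if y = b then (1:ℝ) else 0) + ∑ t ∈ Finset.range M, st17q p (t + 1) y b) :=
          Finset.sum_le_sum fun y _ => step y
      _ = (∑ y, p a y * ∑ t ∈ Finset.range M, st17q p (t + 1) y b)
            + ∑ y, p a y * (if y = b then (1:ℝ) else 0) := by
          rw [← Finset.sum_add_distrib]
          refine Finset.sum_congr rfl fun y _ => by ring
      _ = (∑ t ∈ Finset.range M, st17q p (t + 1 + 1) a b) + st17q p (0 + 1) a b := by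
          congr 1
          · simp_rw [Finset.mul_sum]
            rw [Finset.sum_comm]
            refine Finset.sum_congr rfl fun t _ => ?_
            show (∑ y, p a y * st17q p (t + 1) y b) = st17q p (t + 1 + 1) a b
            rfl
      _ = ∑ t ∈ Finset.range (M + 1), st17q p (t + 1) a b :=
          (Finset.sum_range_succ' (fun t => st17q p (t + 1) a b) M).symm

end Aux4

noncomputable def st17r (k : ℕ) (p : Fin (k + 1) → Fin (k + 1) → ℝ) (j : ℕ) : ℝ :=
  if hj : j < k then p (Fin.castSucc ⟨j, hj⟩) (Fin.succ ⟨j, hj⟩)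
    / p (Fin.succ ⟨j, hj⟩) (Fin.castSucc ⟨j, hj⟩) else 1

noncomputable def st17nu (k : ℕ) (p : Fin (k + 1) → Fin (k + 1) → ℝ) (a : Fin (k + 1)) : ℝ :=
  ∏ j ∈ Finset.range (a : ℕ), st17r k p j

/-- For the birth-and-death chain on `{1, …, k+1}` (encoded as `Fin (k+1)`, index `i`
being state `i+1`) with `k = ⌈μn^d⌉`, upward probabilities exactly `λ/(1+λ)` and
downward probabilities at least `1/((1+λ)·2d·ℓ_{j−1})`, where
`∏_{j=1}^{k−1} ℓ_j ≤ K^{n^d}`, the hitting time of `k+1` from `1` satisfies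
`P_1(T_{k+1} ≤ M) ≤ (M/(1 ∧ 2dλ)) · (K·(2dλ)^μ)^{n^d}`. -/
theorem stmt17 (d n : ℕ) (hd : 1 ≤ d) (hn : 1 ≤ n) (lam mu K : ℝ)
    (hlam : 0 < lam) (hmu0 : 0 < mu) (hmu1 : mu < 1) (hK : 0 < K)
    (k : ℕ) (hk : k = ⌈mu * (n : ℝ) ^ d⌉₊)
    (ell : ℕ → ℕ) (hell : ∀ j, 1 ≤ ell j)
    (hprod : (∏ j ∈ Finset.Icc 1 (k - 1), (ell j : ℝ)) ≤ K ^ (n ^ d))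
    (p : Fin (k + 1) → Fin (k + 1) → ℝ)
    (hp : ∀ i j, 0 ≤ p i j) (hst : ∀ i, ∑ j, p i j = 1)
    (hbd : ∀ i j : Fin (k + 1), (i : ℕ) ≠ j → (i : ℕ) + 1 ≠ j → (j : ℕ) + 1 ≠ i →
      p i j = 0)
    (hup : ∀ i : Fin k, p i.castSucc i.succ = lam / (1 + lam))
    (hdown : ∀ i : Fin k, (i : ℕ) + 1 ≤ k - 1 →
      1 / ((1 + lam) * (2 * d) * (ell ((i : ℕ) + 1))) ≤ p i.succ i.castSucc)
    (htop : ∀ i : Fin k, (i : ℕ) = k - 1 → p i.succ i.castSucc = lam / (1 + lam))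
    (M : ℕ) :
    hitProb p 0 (Fin.last k) M
      ≤ ((M : ℝ) / min 1 (2 * d * lam)) * (K * (2 * (d : ℝ) * lam) ^ mu) ^ (n ^ d) := by
  have hd0 : (0:ℝ) < (d:ℝ) := by exact_mod_cast hd
  have hk1 : 1 ≤ k := by
    rw [hk]
    have : (0:ℝ) < mu * (n:ℝ) ^ d := by positivity
    exact Nat.ceil_pos.mpr this
  have hlam1 : (0:ℝ) < 1 + lam := by linarith
  have hup_pos : (0:ℝ) < lam / (1 + lam) := div_pos hlam hlam1
  have hdown_pos : ∀ i : Fin k, 0 < p i.succ i.castSucc := by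
    intro i
    by_cases hi : (i:ℕ) = k - 1
    · rw [htop i hi]; exact hup_pos
    · have hik := i.isLt
      have h2 : (i:ℕ) + 1 ≤ k - 1 := by omega
      refine lt_of_lt_of_le ?_ (hdown i h2)
      have he : (0:ℝ) < ((ell ((i:ℕ)+1)) : ℝ) := by exact_mod_cast hell ((i:ℕ)+1)
      positivity
  have hr_pos : ∀ j, 0 < st17r k p j := by
    intro j; unfold st17r; split
    · rename_i hj
      exact div_pos (by rw [hup]; exact hup_pos) (hdown_pos _)
    · norm_num
  have hnu_pos : ∀ a : Fin (k+1), 0 < st17nu k p a :=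
    fun a => Finset.prod_pos fun j _ => hr_pos j
  have hnu0 : st17nu k p 0 = 1 := by unfold st17nu; simp
  have key : ∀ i : Fin k, st17nu k p i.castSucc * p i.castSucc i.succ
      = st17nu k p i.succ * p i.succ i.castSucc := by
    intro i
    have hnusucc : st17nu k p i.succ = st17nu k p i.castSucc * st17r k p (i:ℕ) := by
      unfold st17nu
      rw [Fin.val_succ, Fin.coe_castSucc, Finset.prod_range_succ]
    have hd' := hdown_pos i
    rw [hnusucc]
    unfold st17r
    rw [dif_pos i.isLt]
    simp only [Fin.eta]
    rw [mul_assoc, div_mul_cancel₀ _ (ne_of_gt hd')]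
  have hdb : ∀ a b : Fin (k+1), st17nu k p a * p a b = st17nu k p b * p b a := by
    rintro ⟨av, hav⟩ ⟨bv, hbv⟩
    by_cases h1 : av = bv
    · subst h1; rfl
    · by_cases h2 : av + 1 = bv
      · have hak : av < k := by omega
        have ha : (⟨av, hav⟩ : Fin (k+1)) = (⟨av, hak⟩ : Fin k).castSucc := Fin.ext rfl
        have hb : (⟨bv, hbv⟩ : Fin (k+1)) = (⟨av, hak⟩ : Fin k).succ := Fin.ext (by simp [← h2])
        rw [ha, hb]
        exact key _
      · by_cases h3 : bv + 1 = av
        · have hbk : bv < k := by omega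
          have hb : (⟨bv, hbv⟩ : Fin (k+1)) = (⟨bv, hbk⟩ : Fin k).castSucc := Fin.ext rfl
          have ha : (⟨av, hav⟩ : Fin (k+1)) = (⟨bv, hbk⟩ : Fin k).succ := Fin.ext (by simp [← h3])
          rw [ha, hb]
          exact (key _).symm
        · rw [hbd ⟨av, hav⟩ ⟨bv, hbv⟩ h1 h2 h3, hbd ⟨bv, hbv⟩ ⟨av, hav⟩ (fun h => h1 h.symm) h3 h2,
            mul_zero, mul_zero]
  have hmain : hitProb p 0 (Fin.last k) M ≤ (M:ℝ) * st17nu k p (Fin.last k) := by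
    refine le_trans (st17hit_le p hp hst (Fin.last k) M 0) ?_
    have hterm : ∀ t, st17q p (t+1) 0 (Fin.last k) ≤ st17nu k p (Fin.last k) := by
      intro t
      have h1 := st17q_rev p (st17nu k p) hdb (t+1) 0 (Fin.last k)
      rw [hnu0, one_mul] at h1
      rw [h1]
      have h2 : st17q p (t+1) (Fin.last k) 0 ≤ 1 := by
        rw [← st17q_rowsum p hst (t+1) (Fin.last k)]
        exact Finset.single_le_sum (f := fun b => st17q p (t+1) (Fin.last k) b)
          (fun b _ => st17q_nonneg p hp _ _ _) (Finset.mem_univ 0)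
      calc st17nu k p (Fin.last k) * st17q p (t+1) (Fin.last k) 0
          ≤ st17nu k p (Fin.last k) * 1 :=
            mul_le_mul_of_nonneg_left h2 (le_of_lt (hnu_pos _))
        _ = st17nu k p (Fin.last k) := mul_one _
    calc ∑ t ∈ Finset.range M, st17q p (t+1) 0 (Fin.last k)
        ≤ ∑ t ∈ Finset.range M, st17nu k p (Fin.last k) :=
          Finset.sum_le_sum fun t _ => hterm t
      _ = (M:ℝ) * st17nu k p (Fin.last k) := by
          rw [Finset.sum_const, Finset.card_range, nsmul_eq_mul]
  set x : ℝ := 2 * (d:ℝ) * lam with hxdef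
  have hx_pos : 0 < x := by rw [hxdef]; positivity
  have hnu_last : st17nu k p (Fin.last k) ≤ x ^ (k-1) * K ^ (n^d) := by
    unfold st17nu
    rw [Fin.val_last]
    have hrange : Finset.range k = Finset.range ((k-1)+1) := by congr 1; omega
    rw [hrange, Finset.prod_range_succ]
    have hlastr : st17r k p (k - 1) = 1 := by
      unfold st17r
      rw [dif_pos (show k - 1 < k by omega)]
      rw [htop ⟨k-1, by omega⟩ rfl, hup ⟨k-1, by omega⟩]
      exact div_self (ne_of_gt hup_pos)
    rw [hlastr, mul_one]
    have hrle : ∀ j ∈ Finset.range (k-1), st17r k p j ≤ x * ((ell (j+1)) : ℝ) := by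
      intro j hj
      rw [Finset.mem_range] at hj
      have hjk : j < k := by omega
      unfold st17r; rw [dif_pos hjk]
      have hi1 : ((⟨j, hjk⟩ : Fin k) : ℕ) + 1 ≤ k - 1 := by simp; omega
      have hdn := hdown ⟨j, hjk⟩ hi1
      have hdnpos := hdown_pos (⟨j, hjk⟩ : Fin k)
      rw [hup ⟨j, hjk⟩]
      rw [div_le_iff₀ hdnpos]
      have hellpos : (0:ℝ) < ((ell (j+1)) : ℝ) := by exact_mod_cast hell (j+1)
      have heq : ((⟨j, hjk⟩ : Fin k) : ℕ) + 1 = j + 1 := rfl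
      rw [heq] at hdn
      calc lam / (1 + lam)
          = (x * ((ell (j+1)):ℝ)) * (1 / ((1+lam) * (2*(d:ℝ)) * ((ell (j+1)):ℝ))) := by
            rw [hxdef]; field_simp
        _ ≤ (x * ((ell (j+1)):ℝ)) * p (⟨j, hjk⟩ : Fin k).succ (⟨j, hjk⟩ : Fin k).castSucc := by
            refine mul_le_mul_of_nonneg_left hdn ?_
            positivity
    calc ∏ j ∈ Finset.range (k-1), st17r k p j
        ≤ ∏ j ∈ Finset.range (k-1), (x * ((ell (j+1)):ℝ)) :=
          Finset.prod_le_prod (fun j _ => le_of_lt (hr_pos j)) hrle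
      _ = x ^ (k-1) * ∏ j ∈ Finset.range (k-1), ((ell (j+1)):ℝ) := by
          rw [Finset.prod_mul_distrib, Finset.prod_const, Finset.card_range]
      _ ≤ x ^ (k-1) * K ^ (n^d) := by
          refine mul_le_mul_of_nonneg_left ?_ (by positivity)
          have hre : (∏ j ∈ Finset.range (k-1), ((ell (j+1)):ℝ))
              = ∏ j ∈ Finset.Icc 1 (k-1), ((ell j):ℝ) := by
            rw [← Finset.Ico_add_one_right_eq_Icc, show k-1+1 = k from by omega,
              Finset.prod_Ico_eq_prod_range]
            refine Finset.prod_congr rfl fun j _ => by rw [add_comm]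
          rw [hre]; exact hprod
  -- final arithmetic
  have hNcast : ((n^d : ℕ):ℝ) = (n:ℝ)^d := by push_cast; ring
  have hmuN_pos : (0:ℝ) < mu * ((n^d : ℕ):ℝ) := by rw [hNcast]; positivity
  have hceil_le : mu * ((n^d : ℕ):ℝ) ≤ (k:ℝ) := by
    rw [hNcast, hk]; exact Nat.le_ceil _
  have hlt_ceil : ((k-1 : ℕ):ℝ) < mu * ((n^d : ℕ):ℝ) := by
    rw [hNcast]
    refine Nat.lt_ceil.mp ?_
    rw [← hk]; omega
  have hxk : x ^ (k-1) * min 1 x ≤ x ^ (mu * ((n^d : ℕ):ℝ)) := by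
    rcases le_or_gt 1 x with h | h
    · rw [min_eq_left h, mul_one]
      calc x ^ (k-1) = x ^ (((k-1:ℕ)):ℝ) := by rw [Real.rpow_natCast]
        _ ≤ x ^ (mu * ((n^d : ℕ):ℝ)) :=
          Real.rpow_le_rpow_of_exponent_le h (le_of_lt hlt_ceil)
    · rw [min_eq_right (le_of_lt h)]
      calc x ^ (k-1) * x = x ^ ((k-1)+1) := (pow_succ x (k-1)).symm
        _ = x ^ ((k:ℕ):ℝ) := by rw [show (k-1)+1 = k from by omega, Real.rpow_natCast]
        _ ≤ x ^ (mu * ((n^d : ℕ):ℝ)) :=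
          Real.rpow_le_rpow_of_exponent_ge hx_pos (le_of_lt h) hceil_le
  have hmin_pos : 0 < min 1 x := lt_min one_pos hx_pos
  have hrhs : (K * x ^ mu) ^ (n^d) = K ^ (n^d) * x ^ (mu * ((n^d : ℕ):ℝ)) := by
    rw [mul_pow, ← Real.rpow_natCast (x ^ mu) (n^d), ← Real.rpow_mul (le_of_lt hx_pos)]
  refine le_trans hmain (le_trans (mul_le_mul_of_nonneg_left hnu_last (Nat.cast_nonneg M)) ?_)
  rw [hrhs, div_mul_eq_mul_div, le_div_iff₀ hmin_pos]
  calc (M:ℝ) * (x ^ (k-1) * K ^ (n^d)) * min 1 x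
      = (x ^ (k-1) * min 1 x) * ((M:ℝ) * K ^ (n^d)) := by ring
    _ ≤ x ^ (mu * ((n^d : ℕ):ℝ)) * ((M:ℝ) * K ^ (n^d)) :=
        mul_le_mul_of_nonneg_right hxk (by positivity)
    _ = (M:ℝ) * (K ^ (n^d) * x ^ (mu * ((n^d : ℕ):ℝ))) := by ring
end
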